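/- arXiv:1701.06259 — 8 statements merged into one kernel-verified Lean document; each statement's English description precedes it below -/
import Mathlib

section
/- Let a, c be positive real numbers and τ a nonzero complex number. Then for every z ∈ ℂ, a·(Re(τ·z))² + c·(Im(τ·z))² = t·|z|² + Re(conj(w)·z²), where t = |τ|²·(a+c)/2 and w = conj(τ)²·(a−c)/2; moreover t > 0 and w/t = (conj(τ)/τ)·(a−c)/(a+c). In particular, the conformal class of the pull-back m_τ* q_{a,c}, in Klein coordinates, equals (conj(τ)/τ)·(a−c)/(a+c). -/
/-- For positive `a, c` and nonzero `τ`, the pull-back `m_τ* q_{a,c}` has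
`(ℝ ⊕ ℂ)`-coordinates `t = |τ|²·(a+c)/2`, `w = conj(τ)²·(a−c)/2`, and its
conformal class in Klein coordinates equals `(conj(τ)/τ)·(a−c)/(a+c)`. -/
theorem klein_class_of_diagonal_pullback (a c : ℝ) (ha : 0 < a) (hc : 0 < c)
    (τ : ℂ) (hτ : τ ≠ 0) (t : ℝ) (w : ℂ)
    (ht : t = ‖τ‖ ^ 2 * ((a + c) / 2))
    (hw : w = ((starRingEnd ℂ) τ) ^ 2 * (((a - c) / 2 : ℝ) : ℂ)) :
    (∀ z : ℂ, a * (τ * z).re ^ 2 + c * (τ * z).im ^ 2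
        = t * ‖z‖ ^ 2 + ((starRingEnd ℂ) w * z ^ 2).re) ∧
    0 < t ∧
    w / (t : ℂ) = ((starRingEnd ℂ) τ / τ) * (((a - c) / (a + c) : ℝ) : ℂ) := by
  subst ht hw
  have habs0 : (0:ℝ) < ‖τ‖ := norm_pos_iff.mpr hτ
  have habs : (0:ℝ) < ‖τ‖ ^ 2 := by positivity
  refine ⟨?_, mul_pos (by positivity : (0:ℝ) < ‖τ‖ ^ 2) (by positivity), ?_⟩
  · intro z
    simp only [Complex.sq_norm, Complex.normSq_apply, Complex.mul_re, Complex.mul_im,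
      map_mul, map_pow, Complex.conj_conj, Complex.conj_ofReal, Complex.ofReal_re,
      Complex.ofReal_im]
    simp only [pow_two, Complex.mul_re, Complex.mul_im]
    ring
  · have h1 : (‖τ‖ ^ 2 : ℂ) = τ * (starRingEnd ℂ) τ := by
      rw [← Complex.ofReal_pow, Complex.sq_norm, Complex.mul_conj]
    have hac : (a + c : ℝ) ≠ 0 := by positivity
    have hτ' : (starRingEnd ℂ) τ ≠ 0 := by simpa using hτ
    have hacC : (a:ℂ) + c ≠ 0 := by exact_mod_cast (Complex.ofReal_ne_zero.mpr hac)
    push_cast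
    rw [h1]
    field_simp
end

section
/- Let τ be a nonzero complex number and q : ℂ → ℝ a positive definite real quadratic form. Suppose t, t' ∈ ℝ and w, w' ∈ ℂ satisfy q(z) = t·|z|² + Re(conj(w)·z²) and q(τ·z) = t'·|z|² + Re(conj(w')·z²) for all z ∈ ℂ. Then Ω(w'/t') = (conj(τ)/τ)·Ω(w/t); that is, the Poincaré invariant satisfies P(m_τ* q) = (conj(τ)/τ)·P(q). -/
/-- The standard isomorphism from the Klein model to the Poincaré model of the
hyperbolic plane on the open unit disc: `Ω(μ) = μ / (1 + √(1 − |μ|²))`. -/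
noncomputable def Omega (μ : ℂ) : ℂ :=
  μ / ((1 : ℂ) + (Real.sqrt (1 - ‖μ‖ ^ 2) : ℂ))

/-- The Poincaré invariant satisfies `P(m_τ* q) = (conj(τ)/τ)·P(q)` for every positive
definite quadratic form `q` on ℂ and every nonzero `τ`. -/
theorem poincare_invariant_of_pullback (q : ℂ → ℝ) (B : ℂ →ₗ[ℝ] ℂ →ₗ[ℝ] ℝ)
    (hB : ∀ x y : ℂ, B x y = B y x) (hq : ∀ z : ℂ, q z = B z z)
    (hpos : ∀ z : ℂ, z ≠ 0 → 0 < q z)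
    (τ : ℂ) (hτ : τ ≠ 0) (t t' : ℝ) (w w' : ℂ)
    (h1 : ∀ z : ℂ, q z = t * ‖z‖ ^ 2 + ((starRingEnd ℂ) w * z ^ 2).re)
    (h2 : ∀ z : ℂ, q (τ * z) = t' * ‖z‖ ^ 2 + ((starRingEnd ℂ) w' * z ^ 2).re) :
    Omega (w' / (t' : ℂ)) = ((starRingEnd ℂ) τ / τ) * Omega (w / (t : ℂ)) := by
  have hE : ∀ z : ℂ, t * ‖τ * z‖ ^ 2 + ((starRingEnd ℂ) w * (τ * z) ^ 2).re
      = t' * ‖z‖ ^ 2 + ((starRingEnd ℂ) w' * z ^ 2).re :=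
    fun z => (h1 (τ * z)).symm.trans (h2 z)
  -- t > 0
  have ht : 0 < t := by
    have p1 := hpos 1 one_ne_zero
    have p2 := hpos Complex.I Complex.I_ne_zero
    rw [h1] at p1 p2
    simp [Complex.ext_iff, Complex.mul_re] at p1 p2
    nlinarith [p1, p2]
  have e1 := hE 1
  have e2 := hE Complex.I
  have e3 := hE (1 + Complex.I)
  have ha : ‖τ‖ * ‖τ‖ = τ.re * τ.re + τ.im * τ.im := by
    rw [← sq, Complex.sq_norm, Complex.normSq_apply]
  have hb : ‖1 + Complex.I‖ * ‖1 + Complex.I‖ = 2 := by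
    rw [← sq, Complex.sq_norm]
    norm_num [Complex.normSq_apply]
  have hc : ‖τ‖ * ‖1 + Complex.I‖ * (‖τ‖ * ‖1 + Complex.I‖)
      = 2 * (τ.re * τ.re + τ.im * τ.im) := by
    rw [mul_mul_mul_comm, ha, hb]; ring
  have ha2 : ‖τ‖ ^ 2 = τ.re * τ.re + τ.im * τ.im := by rw [pow_two, ha]
  simp [pow_two, ha, hb, hc, Complex.ext_iff, Complex.mul_re, Complex.mul_im, map_mul,
    Complex.sq_norm, Complex.normSq_apply, Complex.add_re, Complex.add_im] at e1 e2 e3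
  have ht' : t' = t * ‖τ‖ ^ 2 := by
    simp [Complex.sq_norm, Complex.normSq_apply] at *
    nlinarith [e1, e2, ha2]
  have hw' : w' = w * ((starRingEnd ℂ) τ) ^ 2 := by
    rw [ht', ha2] at e1 e2 e3
    apply Complex.ext <;>
      simp only [pow_two, Complex.mul_re, Complex.mul_im, Complex.conj_re, Complex.conj_im] <;>
      ring_nf at e1 e2 e3 ⊢ <;> linarith
  subst ht' hw'
  -- the ratio
  have habs : ‖(starRingEnd ℂ) τ / τ‖ = 1 := by
    simp [map_div₀, Complex.norm_conj, div_self (norm_ne_zero_iff.mpr hτ)]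
  have hratio : w * ((starRingEnd ℂ) τ) ^ 2 / ((t * ‖τ‖ ^ 2 : ℝ) : ℂ)
      = ((starRingEnd ℂ) τ / τ) * (w / (t : ℂ)) := by
    have h1 : ((‖τ‖ : ℝ) : ℂ) ^ 2 = τ * (starRingEnd ℂ) τ := by
      rw [← Complex.ofReal_pow, Complex.sq_norm, ← Complex.mul_conj]
    push_cast
    rw [h1]
    have hconj : (starRingEnd ℂ) τ ≠ 0 := by simpa using hτ
    have htC : (t : ℂ) ≠ 0 := by exact_mod_cast ht.ne'
    field_simp
  rw [hratio]
  unfold Omega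
  rw [norm_mul, habs, one_mul, mul_div_assoc]
end

section
/- Let a, c be real numbers of the same sign (a·c > 0), τ a nonzero complex number, and γ the positive square root of c/a. Let q(z) = a·(Re(τ·z))² + c·(Im(τ·z))², and suppose t ∈ ℝ and w ∈ ℂ satisfy q(z) = t·|z|² + Re(conj(w)·z²) for all z ∈ ℂ. Then t ≠ 0 and Ω(w/t) = ((1 − γ)/(1 + γ))·(conj(τ)/τ); that is, the Poincaré invariant of the definite form q = m_τ* q_{a,c} equals ((1 − γ)/(1 + γ))·(conj(τ)/τ). -/
private lemma key_ratio (x y : ℝ) (hx : 0 < x) (hy : 0 < y) :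
    (x ^ 2 - y ^ 2) / (x ^ 2 + y ^ 2) * (1 + y / x) =
      (1 - y / x) * (1 + 2 * (x * y) / (x ^ 2 + y ^ 2)) := by
  have h1 : (x ^ 2 + y ^ 2 : ℝ) ≠ 0 := by positivity
  field_simp
  ring

/-- The Poincaré invariant of the definite form `q = m_τ* q_{a,c}` (with `a,c` of the
same sign, `τ ≠ 0`, and `γ = √(c/a)`) equals `((1 − γ)/(1 + γ))·(conj(τ)/τ)`. -/
theorem poincare_invariant_of_diagonal_pullback (a c : ℝ) (hac : 0 < a * c)
    (τ : ℂ) (hτ : τ ≠ 0) (γ : ℝ) (hγ : γ = Real.sqrt (c / a))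
    (t : ℝ) (w : ℂ)
    (hrep : ∀ z : ℂ, a * (τ * z).re ^ 2 + c * (τ * z).im ^ 2
        = t * ‖z‖ ^ 2 + ((starRingEnd ℂ) w * z ^ 2).re) :
    t ≠ 0 ∧
    Omega (w / (t : ℂ)) = (((1 - γ) / (1 + γ) : ℝ) : ℂ) * ((starRingEnd ℂ) τ / τ) := by
  have h1 := hrep 1
  have h2 := hrep Complex.I
  have h3 := hrep (1 + Complex.I)
  simp only [Complex.sq_norm, Complex.normSq_apply, Complex.mul_re, Complex.mul_im,
    Complex.add_re, Complex.add_im, Complex.one_re, Complex.one_im, Complex.I_re,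
    Complex.I_im, Complex.re_ofNat, Complex.im_ofNat, map_one, one_pow, Complex.I_sq,
    Complex.neg_re, Complex.neg_im, neg_sq, add_sq,
    Complex.conj_re, Complex.conj_im, mul_one, mul_zero, zero_mul, sub_zero,
    zero_sub, add_zero, zero_add, one_mul, neg_neg, mul_neg, neg_zero] at h1 h2 h3
  -- solve for t and w
  have ht : 2 * t = (a + c) * (τ.re ^ 2 + τ.im ^ 2) := by linarith
  have hwre : 2 * w.re = (a - c) * (τ.re ^ 2 - τ.im ^ 2) := by linarith
  have hwim : w.im = (c - a) * (τ.re * τ.im) := by nlinarith [h1, h2, h3]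
  -- sign facts
  have hnsq : 0 < τ.re ^ 2 + τ.im ^ 2 := by
    have := Complex.normSq_pos.mpr hτ
    simpa [Complex.normSq_apply, pow_two] using this
  have hsum : a + c ≠ 0 := by
    rcases mul_pos_iff.mp hac with ⟨ha, hc⟩ | ⟨ha, hc⟩ <;> intro h <;> linarith
  have ht0 : t ≠ 0 := by
    intro h
    rw [h, mul_zero] at ht
    rcases mul_eq_zero.mp ht.symm with h' | h'
    · exact hsum h'
    · exact absurd h' (ne_of_gt hnsq)
  refine ⟨ht0, ?_⟩
  set u : ℂ := (starRingEnd ℂ) τ / τ with hu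
  -- complex forms of w and t
  have hw : w = (((a - c) / 2 : ℝ) : ℂ) * ((starRingEnd ℂ) τ) ^ 2 := by
    apply Complex.ext <;>
      simp only [Complex.mul_re, Complex.mul_im, Complex.ofReal_re, Complex.ofReal_im,
        pow_two, Complex.mul_re, Complex.mul_im, Complex.conj_re, Complex.conj_im] <;>
      nlinarith [hwre, hwim]
  have hN : ((τ.re ^ 2 + τ.im ^ 2 : ℝ) : ℂ) = τ * (starRingEnd ℂ) τ := by
    rw [Complex.mul_conj]
    norm_cast
    simp [Complex.normSq_apply]
    ring
  have htc : (t : ℂ) = (((a + c) / 2 : ℝ) : ℂ) * ((τ.re ^ 2 + τ.im ^ 2 : ℝ) : ℂ) := by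
    norm_cast
    linarith
  have htC : (t : ℂ) ≠ 0 := by exact_mod_cast ht0
  have hsumC : ((a : ℂ) + c) ≠ 0 := by exact_mod_cast hsum
  have hwt : w / (t : ℂ) = (((a - c) / (a + c) : ℝ) : ℂ) * u := by
    rw [hu, div_eq_iff htC, hw, htc, hN]
    push_cast
    field_simp
  -- absolute value
  have hu1 : ‖u‖ = 1 := by
    rw [hu, norm_div, Complex.norm_conj, div_self (norm_ne_zero_iff.mpr hτ)]
  have habs : ‖w / (t : ℂ)‖ = |(a - c) / (a + c)| := by
    rw [hwt, norm_mul, hu1, mul_one, Complex.norm_real, Real.norm_eq_abs]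
  have h5 : 1 - ‖w / (t : ℂ)‖ ^ 2 = (4 * (a * c)) / (a + c) ^ 2 := by
    rw [habs, sq_abs]
    field_simp
    ring
  have h6 : Real.sqrt ((4 * (a * c)) / (a + c) ^ 2) = Real.sqrt (4 * (a * c)) / |a + c| := by
    rw [Real.sqrt_div (by positivity), Real.sqrt_sq_eq_abs]
  -- reduce to a real identity
  suffices hr : (a - c) / (a + c) / (1 + Real.sqrt (4 * (a * c)) / |a + c|) = (1 - γ) / (1 + γ) by
    rw [Omega, h5, h6, hwt, ← hr]
    push_cast
    ring
  rcases mul_pos_iff.mp hac with ⟨ha, hc⟩ | ⟨ha, hc⟩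
  · have hga : γ = Real.sqrt c / Real.sqrt a := by rw [hγ, Real.sqrt_div hc.le]
    have h4ac : Real.sqrt (4 * (a * c)) = 2 * (Real.sqrt a * Real.sqrt c) := by
      rw [show 4 * (a * c) = (2 * (Real.sqrt a * Real.sqrt c)) ^ 2 by
        rw [mul_pow, mul_pow, Real.sq_sqrt ha.le, Real.sq_sqrt hc.le]; ring,
        Real.sqrt_sq (by positivity)]
    have habs2 : |a + c| = a + c := abs_of_pos (by linarith)
    have hA : 0 < Real.sqrt a := Real.sqrt_pos.mpr ha
    have hC : 0 < Real.sqrt c := Real.sqrt_pos.mpr hc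
    have ea : a = Real.sqrt a ^ 2 := (Real.sq_sqrt ha.le).symm
    have ec : c = Real.sqrt c ^ 2 := (Real.sq_sqrt hc.le).symm
    rw [hga, h4ac, habs2]
    set A := Real.sqrt a
    set C := Real.sqrt c
    rw [ea, ec]
    have hd1 : (0:ℝ) < A ^ 2 + C ^ 2 := by positivity
    have hd2 : (0:ℝ) < 1 + 2 * (A * C) / (A ^ 2 + C ^ 2) := by positivity
    have hd3 : (0:ℝ) < 1 + C / A := by positivity
    clear_value A C
    clear hrep h1 h2 h3 ht hwre hwim hw hN htc hwt habs h5 h6 hu hu1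
    rw [div_eq_div_iff hd2.ne' hd3.ne']
    exact key_ratio A C hA hC
  · have hga : γ = Real.sqrt (-c) / Real.sqrt (-a) := by
      rw [hγ, show c / a = (-c) / (-a) by rw [neg_div_neg_eq], Real.sqrt_div (by linarith)]
    have h4ac : Real.sqrt (4 * (a * c)) = 2 * (Real.sqrt (-a) * Real.sqrt (-c)) := by
      rw [show 4 * (a * c) = (2 * (Real.sqrt (-a) * Real.sqrt (-c))) ^ 2 by
        rw [mul_pow, mul_pow, Real.sq_sqrt (by linarith), Real.sq_sqrt (by linarith)]; ring,
        Real.sqrt_sq (by positivity)]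
    have habs2 : |a + c| = -(a + c) := abs_of_neg (by linarith)
    have hA : 0 < Real.sqrt (-a) := Real.sqrt_pos.mpr (by linarith)
    have hC : 0 < Real.sqrt (-c) := Real.sqrt_pos.mpr (by linarith)
    have ea : a = -(Real.sqrt (-a) ^ 2) := by rw [Real.sq_sqrt (by linarith)]; ring
    have ec : c = -(Real.sqrt (-c) ^ 2) := by rw [Real.sq_sqrt (by linarith)]; ring
    rw [hga, h4ac, habs2]
    set A := Real.sqrt (-a)
    set C := Real.sqrt (-c)
    rw [ea, ec]
    have hd1 : (0:ℝ) < A ^ 2 + C ^ 2 := by positivity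
    have hd2 : (0:ℝ) < 1 + 2 * (A * C) / (A ^ 2 + C ^ 2) := by positivity
    have hd3 : (0:ℝ) < 1 + C / A := by positivity
    clear_value A C
    clear hrep h1 h2 h3 ht hwre hwim hw hN htc hwt habs h5 h6 hu hu1
    have hd4 : (-A ^ 2 + -C ^ 2 : ℝ) ≠ 0 := by nlinarith
    rw [show -(-A ^ 2 + -C ^ 2) = A ^ 2 + C ^ 2 from by ring]
    rw [show (-A ^ 2 - -C ^ 2) / (-A ^ 2 + -C ^ 2) = (A ^ 2 - C ^ 2) / (A ^ 2 + C ^ 2) from by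
      rw [div_eq_div_iff hd4 hd1.ne']; ring]
    rw [div_eq_div_iff hd2.ne' hd3.ne']
    exact key_ratio A C hA hC
end

section
/- Let T : ℂ → ℂ be a real-linear map with positive determinant. Then |T_z̄| < |T_z| (in particular |μ_T| < 1), for every z ∈ ℂ one has ‖T(z)‖² = t·|z|² + Re(conj(w)·z²) with t = |T_z|² + |T_z̄|² and w = 2·conj(T_z)·T_z̄, and moreover Ω(w/t) = μ_T. That is, the Poincaré conformal dilatation of T — the image under the Klein-to-Poincaré isomorphism Ω of the Klein invariant of the pull-back form T* n, n(z) = |z|² — equals the classical complex dilatation μ_T = T_z̄/T_z. -/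
/-- The Poincaré conformal dilatation of an orientation-preserving invertible
real-linear map `T : ℂ → ℂ` — the image under the Klein-to-Poincaré isomorphism `Ω`
of the Klein invariant of the pull-back form `T* n`, `n(z) = |z|²` — equals the
classical complex dilatation `μ_T = T_z̄/T_z`. -/
theorem poincare_dilatation_eq_classical (T : ℂ →ₗ[ℝ] ℂ) (hdet : 0 < LinearMap.det T)
    (Tz Tzb : ℂ)
    (hTz : Tz = (T 1 - Complex.I * T Complex.I) / 2)
    (hTzb : Tzb = (T 1 + Complex.I * T Complex.I) / 2)
    (t : ℝ) (w : ℂ)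
    (ht : t = ‖Tz‖ ^ 2 + ‖Tzb‖ ^ 2)
    (hw : w = 2 * (starRingEnd ℂ) Tz * Tzb) :
    ‖Tzb‖ < ‖Tz‖ ∧
    (∀ z : ℂ, ‖T z‖ ^ 2 = t * ‖z‖ ^ 2 + ((starRingEnd ℂ) w * z ^ 2).re) ∧
    Omega (w / (t : ℂ)) = Tzb / Tz := by
  -- T z = Tz z + Tzb conj z
  have hT : ∀ z : ℂ, T z = Tz * z + Tzb * (starRingEnd ℂ) z := by
    intro z
    have key : ∀ x y : ℝ, T (x • (1:ℂ) + y • Complex.I)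
        = Tz * (x + y * Complex.I) + Tzb * (x - y * Complex.I) := by
      intro x y
      rw [map_add, map_smul, map_smul, hTz, hTzb]
      simp only [Complex.real_smul, smul_eq_mul]
      linear_combination ((y:ℂ) * T Complex.I) * Complex.I_sq
    have h1 := key z.re z.im
    rw [show z.re • (1:ℂ) + z.im • Complex.I = z by
      simp [Complex.real_smul, Complex.re_add_im]] at h1
    rw [h1, show ((z.re:ℂ) + z.im * Complex.I) = z by simp [Complex.re_add_im],
      show ((z.re:ℂ) - z.im * Complex.I) = (starRingEnd ℂ) z by simp [Complex.ext_iff]]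
  -- determinant formula
  have hdet' : LinearMap.det T = ‖Tz‖ ^ 2 - ‖Tzb‖ ^ 2 := by
    rw [← LinearMap.det_toMatrix Complex.basisOneI, Matrix.det_fin_two]
    simp only [Complex.sq_norm, hTz, hTzb]
    simp [LinearMap.toMatrix_apply, Complex.coe_basisOneI_repr, Complex.coe_basisOneI,
      Complex.normSq_apply, Complex.add_re, Complex.add_im, Complex.sub_re, Complex.sub_im,
      Complex.mul_re, Complex.mul_im, Complex.div_re, Complex.div_im]
    ring
  set a := ‖Tz‖ with ha
  set b := ‖Tzb‖ with hb
  have hab : b < a := by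
    nlinarith [hdet' ▸ hdet, norm_nonneg Tz, norm_nonneg Tzb]
  have ha0 : 0 < a := lt_of_le_of_lt (norm_nonneg Tzb) hab
  have hTz0 : Tz ≠ 0 := by
    intro h; rw [h] at ha; simp at ha; rw [ha] at ha0; exact lt_irrefl 0 ha0
  have ht0 : 0 < t := by rw [ht]; positivity
  refine ⟨hab, ?_, ?_⟩
  · intro z
    rw [hT z, hw, ht, pow_two z]
    simp only [Complex.sq_norm]
    simp only [Complex.normSq_apply, Complex.add_re, Complex.add_im, Complex.mul_re,
      Complex.mul_im, Complex.conj_re, Complex.conj_im, map_mul, Complex.ofReal_re,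
      Complex.ofReal_im, Complex.re_ofNat, Complex.im_ofNat, ha, hb, Complex.sq_norm,
      Complex.normSq_apply]
    ring
  · -- Omega computation
    have habs_w : ‖w‖ = 2 * a * b := by
      rw [hw]; simp [map_mul, ha, hb]
    have habs : ‖w / (t:ℂ)‖ = 2 * a * b / t := by
      rw [norm_div, habs_w, Complex.norm_real, Real.norm_eq_abs, abs_of_pos ht0]
    have hsqrt : Real.sqrt (1 - ‖w / (t:ℂ)‖ ^ 2) = (a^2 - b^2) / t := by
      rw [habs]
      have : 1 - (2*a*b/t)^2 = ((a^2-b^2)/t)^2 := by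
        field_simp; rw [ht]; ring
      rw [this, Real.sqrt_sq (div_nonneg (by nlinarith) ht0.le)]
    rw [Omega, hsqrt]
    have hr : (1:ℝ) + (a^2 - b^2)/t = 2*a^2/t := by
      field_simp; rw [ht]; ring
    have hden : (1 : ℂ) + ((((a^2 - b^2) / t : ℝ)) : ℂ) = ((2*a^2/t : ℝ) : ℂ) := by
      rw [← hr]; push_cast; ring
    rw [hden]
    rw [div_div, hw]
    have htC : (t:ℂ) ≠ 0 := by exact_mod_cast ht0.ne'
    rw [show ((t:ℂ)) * ((2*a^2/t : ℝ) : ℂ) = 2 * ((a^2 : ℝ) : ℂ) by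
      push_cast; field_simp]
    have haa : ((a^2 : ℝ) : ℂ) = Tz * (starRingEnd ℂ) Tz := by
      rw [ha, ← Complex.normSq_eq_norm_sq]; exact (Complex.mul_conj Tz).symm
    have hc : (starRingEnd ℂ) Tz ≠ 0 := by simpa using hTz0
    rw [haa, div_eq_div_iff (mul_ne_zero two_ne_zero (mul_ne_zero hTz0 hc)) hTz0]
    ring
end

section
/- Let u, T : ℂ → ℂ be real-linear maps, each with positive determinant. Then the composition T ∘ u has positive determinant, the complex number u_z + conj(u_z̄)·μ_T is nonzero, and μ_{T∘u} = (u_z̄ + conj(u_z)·μ_T)/(u_z + conj(u_z̄)·μ_T). In particular, the complex dilatation of T ∘ u is obtained from the complex dilatation of T by applying a map u* of the unit disc depending only on u, so that μ_{T∘u} = u*(μ_T). -/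
open Complex

private lemma dil_key (a b : ℂ) (x y : ℝ) :
    x • a + y • b = ((a - I*b)/2)*((x:ℂ)+(y:ℂ)*I) + ((a + I*b)/2)*((x:ℂ)-(y:ℂ)*I) := by
  simp only [Complex.real_smul]
  linear_combination ((y:ℂ)*b) * Complex.I_sq

private lemma dil_Tformula (T : ℂ →ₗ[ℝ] ℂ) (w : ℂ) :
    T w = ((T 1 - I * T I)/2) * w + ((T 1 + I * T I)/2) * (starRingEnd ℂ) w := by
  have h2 : (starRingEnd ℂ) w = (w.re:ℂ) - (w.im:ℂ) * I := by simp [Complex.ext_iff]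
  have h1 : T w = w.re • T 1 + w.im • T I := by
    have : w = w.re • (1:ℂ) + w.im • I := by simp [Complex.real_smul, Complex.ext_iff]
    conv_lhs => rw [this]
    rw [map_add, map_smul, map_smul]
  rw [h1, h2, dil_key]
  congr 2
  simp [Complex.ext_iff]

private lemma dil_det_formula (T : ℂ →ₗ[ℝ] ℂ) :
    LinearMap.det T = (T 1).re * (T I).im - (T 1).im * (T I).re := by
  rw [← LinearMap.det_toMatrix Complex.basisOneI, Matrix.det_fin_two]
  simp [LinearMap.toMatrix_apply]
  ring

private lemma dil_normSq_diff (T : ℂ →ₗ[ℝ] ℂ) :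
    Complex.normSq ((T 1 - I * T I)/2) - Complex.normSq ((T 1 + I * T I)/2)
      = LinearMap.det T := by
  rw [dil_det_formula]
  simp [Complex.normSq_apply, Complex.div_re, Complex.div_im]
  ring

/-- The action of an orientation-preserving invertible real-linear map `u : ℂ → ℂ`
on complex dilatations: `μ_{T∘u} = (u_z̄ + conj(u_z)·μ_T)/(u_z + conj(u_z̄)·μ_T)`,
i.e. `μ_{T∘u} = u*(μ_T)` for a map `u*` of the unit disc depending only on `u`. -/
theorem dilatation_of_composition (u T : ℂ →ₗ[ℝ] ℂ)
    (hu : 0 < LinearMap.det u) (hT : 0 < LinearMap.det T)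
    (uz uzb Tz Tzb Cz Czb : ℂ)
    (huz : uz = (u 1 - Complex.I * u Complex.I) / 2)
    (huzb : uzb = (u 1 + Complex.I * u Complex.I) / 2)
    (hTz : Tz = (T 1 - Complex.I * T Complex.I) / 2)
    (hTzb : Tzb = (T 1 + Complex.I * T Complex.I) / 2)
    (hCz : Cz = ((T.comp u) 1 - Complex.I * (T.comp u) Complex.I) / 2)
    (hCzb : Czb = ((T.comp u) 1 + Complex.I * (T.comp u) Complex.I) / 2) :
    0 < LinearMap.det (T.comp u) ∧
    uz + (starRingEnd ℂ) uzb * (Tzb / Tz) ≠ 0 ∧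
    Czb / Cz = (uzb + (starRingEnd ℂ) uz * (Tzb / Tz))
      / (uz + (starRingEnd ℂ) uzb * (Tzb / Tz)) := by
  have hdetc : 0 < LinearMap.det (T.comp u) := by
    rw [LinearMap.det_comp]; exact mul_pos hT hu
  have hTineq : Complex.normSq Tzb < Complex.normSq Tz := by
    have := dil_normSq_diff T
    rw [← hTz, ← hTzb] at this
    linarith
  have hUineq : Complex.normSq uzb < Complex.normSq uz := by
    have := dil_normSq_diff u
    rw [← huz, ← huzb] at this
    linarith
  have hTzne : Tz ≠ 0 := by
    intro h
    rw [h, map_zero] at hTineq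
    exact absurd hTineq (Complex.normSq_nonneg Tzb).not_gt
  have habsT : ‖Tzb‖ < ‖Tz‖ := by
    nlinarith [norm_nonneg Tz, norm_nonneg Tzb, Complex.sq_norm Tz, Complex.sq_norm Tzb]
  have habsU : ‖uzb‖ < ‖uz‖ := by
    nlinarith [norm_nonneg uz, norm_nonneg uzb, Complex.sq_norm uz, Complex.sq_norm uzb]
  have hmu : ‖Tzb / Tz‖ < 1 := by
    rw [norm_div, div_lt_one (norm_pos_iff.mpr hTzne)]
    exact habsT
  have hden : uz + (starRingEnd ℂ) uzb * (Tzb / Tz) ≠ 0 := by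
    intro h
    have h2 : ‖(starRingEnd ℂ) uzb * (Tzb / Tz)‖ < ‖uz‖ := by
      rw [norm_mul, Complex.norm_conj]
      calc ‖uzb‖ * ‖Tzb / Tz‖
          ≤ ‖uzb‖ * 1 :=
            mul_le_mul_of_nonneg_left hmu.le (norm_nonneg _)
        _ = ‖uzb‖ := mul_one _
        _ < ‖uz‖ := habsU
    have h3 : (starRingEnd ℂ) uzb * (Tzb / Tz) = -uz := by linear_combination h
    rw [h3, norm_neg] at h2
    exact lt_irrefl _ h2
  refine ⟨hdetc, hden, ?_⟩
  have hu1 : u 1 = uz + uzb := by rw [huz, huzb]; ring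
  have huI : u Complex.I = Complex.I * (uz - uzb) := by
    rw [huz, huzb]
    field_simp
    linear_combination (2 * u Complex.I) * Complex.I_sq
  have hCz' : Cz = Tz * (uz + (starRingEnd ℂ) uzb * (Tzb / Tz)) := by
    rw [hCz]
    simp only [LinearMap.comp_apply]
    rw [dil_Tformula T (u 1), dil_Tformula T (u Complex.I), ← hTz, ← hTzb, hu1, huI]
    simp only [map_add, map_mul, map_sub, Complex.conj_I]
    field_simp
    linear_combination (-Tz*(uz-uzb)+Tzb*((starRingEnd ℂ) uz - (starRingEnd ℂ) uzb)) * Complex.I_sq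
  have hCzb' : Czb = Tz * (uzb + (starRingEnd ℂ) uz * (Tzb / Tz)) := by
    rw [hCzb]
    simp only [LinearMap.comp_apply]
    rw [dil_Tformula T (u 1), dil_Tformula T (u Complex.I), ← hTz, ← hTzb, hu1, huI]
    simp only [map_add, map_mul, map_sub, Complex.conj_I]
    field_simp
    linear_combination (Tz*(uz-uzb)-Tzb*((starRingEnd ℂ) uz - (starRingEnd ℂ) uzb)) * Complex.I_sq
  rw [hCz', hCzb', mul_div_mul_left _ _ hTzne]
end

section
/- Let V and W be complex vector spaces of complex dimension 1, T : V → W a bijective real-linear map, v ∈ V nonzero, and w, w' ∈ W nonzero. Consider the real-linear maps S = f_w ∘ T ∘ f_v⁻¹ and S' = f_{w'} ∘ T ∘ f_v⁻¹ from ℂ to ℂ. If S_z ≠ 0, then S'_z ≠ 0 and μ_{S'} = μ_S; that is, the complex dilatation π_T(v, w) of f_w ∘ T ∘ f_v⁻¹ does not depend on the choice of the nonzero vector w ∈ W. -/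
/-- For a bijective real-linear map `T : V → W` between 1-dimensional complex vector
spaces, the complex dilatation `π_T(v, w)` of `S = f_w ∘ T ∘ f_v⁻¹ : ℂ → ℂ` does not
depend on the choice of the nonzero vector `w ∈ W`. -/
theorem dilatation_independent_of_target_vector
    {V W : Type*} [AddCommGroup V] [Module ℝ V] [Module ℂ V] [IsScalarTower ℝ ℂ V]
    [AddCommGroup W] [Module ℝ W] [Module ℂ W] [IsScalarTower ℝ ℂ W]
    (hdV : Module.finrank ℂ V = 1) (hdW : Module.finrank ℂ W = 1)
    (T : V →ₗ[ℝ] W) (hT : Function.Bijective T)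
    (v : V) (hv : v ≠ 0) (w w' : W) (hw : w ≠ 0) (hw' : w' ≠ 0)
    (fv : V ≃ₗ[ℂ] ℂ) (hfv : fv v = 1)
    (fw fw' : W →ₗ[ℂ] ℂ) (hfw : fw w = 1) (hfw' : fw' w' = 1)
    (Sz Szb S'z S'zb : ℂ)
    (hSz : Sz = (fw (T (fv.symm 1)) - Complex.I * fw (T (fv.symm Complex.I))) / 2)
    (hSzb : Szb = (fw (T (fv.symm 1)) + Complex.I * fw (T (fv.symm Complex.I))) / 2)
    (hS'z : S'z = (fw' (T (fv.symm 1)) - Complex.I * fw' (T (fv.symm Complex.I))) / 2)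
    (hS'zb : S'zb = (fw' (T (fv.symm 1)) + Complex.I * fw' (T (fv.symm Complex.I))) / 2)
    (hSz0 : Sz ≠ 0) :
    S'z ≠ 0 ∧ S'zb / S'z = Szb / Sz := by
  -- every element of W is a multiple of w
  have hspan : ∀ z : W, ∃ c : ℂ, c • w = z :=
    (finrank_eq_one_iff_of_nonzero' w hw).mp hdW
  -- fw' = c • fw with c = fw' w
  set c : ℂ := fw' w with hc
  have key : ∀ x : W, fw' x = c * fw x := by
    intro x
    obtain ⟨a, rfl⟩ := hspan x
    simp [map_smul, hfw, mul_comm, hc]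
  have hc0 : c ≠ 0 := by
    intro h
    have := key w'
    rw [hfw', h, zero_mul] at this
    exact one_ne_zero this
  have h1 : S'z = c * Sz := by
    rw [hS'z, hSz, key, key]; ring
  have h2 : S'zb = c * Szb := by
    rw [hS'zb, hSzb, key, key]; ring
  refine ⟨by simp [h1, hc0, hSz0], ?_⟩
  rw [h1, h2, mul_div_mul_left _ _ hc0]
end

section
/- Let V and W be complex vector spaces of complex dimension 1, T : V → W a bijective real-linear map, w ∈ W nonzero, and u, v ∈ V nonzero with v = a • u for a (necessarily nonzero) complex number a. Consider the real-linear maps S_u = f_w ∘ T ∘ f_u⁻¹ and S_v = f_w ∘ T ∘ f_v⁻¹ from ℂ to ℂ. If (S_u)_z ≠ 0, then (S_v)_z ≠ 0 and μ_{S_v} = (conj(a)/a)·μ_{S_u}; that is, replacing the reference vector u by v = a•u multiplies the complex dilatation π_T(u) by σ = conj(a)/a. -/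
lemma dil_key_z (a A B : ℂ) :
    ((a.re : ℂ) * A + (a.im : ℂ) * B -
      Complex.I * (((Complex.I * a).re : ℂ) * A + ((Complex.I * a).im : ℂ) * B)) / 2
    = a * ((A - Complex.I * B) / 2) := by
  simp only [Complex.mul_re, Complex.mul_im, Complex.I_re, Complex.I_im]
  rw [← Complex.re_add_im a]
  simp only [Complex.add_re, Complex.add_im, Complex.ofReal_re, Complex.ofReal_im,
    Complex.mul_re, Complex.mul_im, Complex.I_re, Complex.I_im]
  push_cast
  ring_nf
  simp [Complex.I_sq]
  ring

lemma dil_key_zb (a A B : ℂ) :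
    ((a.re : ℂ) * A + (a.im : ℂ) * B +
      Complex.I * (((Complex.I * a).re : ℂ) * A + ((Complex.I * a).im : ℂ) * B)) / 2
    = (starRingEnd ℂ) a * ((A + Complex.I * B) / 2) := by
  rw [← Complex.re_add_im a]
  simp only [map_add, map_mul, Complex.conj_I, Complex.conj_ofReal,
    Complex.add_re, Complex.add_im, Complex.ofReal_re, Complex.ofReal_im,
    Complex.mul_re, Complex.mul_im, Complex.I_re, Complex.I_im]
  push_cast
  ring_nf
  simp [Complex.I_sq]
  ring

/-- For a bijective real-linear map `T : V → W` between 1-dimensional complex vector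
spaces, replacing the reference vector `u ∈ V` by `v = a • u` multiplies the complex
dilatation `π_T(u)` (the dilatation of `f_w ∘ T ∘ f_u⁻¹ : ℂ → ℂ`) by `σ = conj(a)/a`. -/
theorem dilatation_of_source_vector_change
    {V W : Type*} [AddCommGroup V] [Module ℝ V] [Module ℂ V] [IsScalarTower ℝ ℂ V]
    [AddCommGroup W] [Module ℝ W] [Module ℂ W] [IsScalarTower ℝ ℂ W]
    (hdV : Module.finrank ℂ V = 1) (hdW : Module.finrank ℂ W = 1)
    (T : V →ₗ[ℝ] W) (hT : Function.Bijective T)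
    (u v : V) (hu : u ≠ 0) (hv : v ≠ 0) (a : ℂ) (hva : v = a • u)
    (w : W) (hw : w ≠ 0)
    (fu fv : V ≃ₗ[ℂ] ℂ) (hfu : fu u = 1) (hfv : fv v = 1)
    (fw : W →ₗ[ℂ] ℂ) (hfw : fw w = 1)
    (Suz Suzb Svz Svzb : ℂ)
    (hSuz : Suz = (fw (T (fu.symm 1)) - Complex.I * fw (T (fu.symm Complex.I))) / 2)
    (hSuzb : Suzb = (fw (T (fu.symm 1)) + Complex.I * fw (T (fu.symm Complex.I))) / 2)
    (hSvz : Svz = (fw (T (fv.symm 1)) - Complex.I * fw (T (fv.symm Complex.I))) / 2)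
    (hSvzb : Svzb = (fw (T (fv.symm 1)) + Complex.I * fw (T (fv.symm Complex.I))) / 2)
    (hSuz0 : Suz ≠ 0) :
    Svz ≠ 0 ∧ Svzb / Svz = ((starRingEnd ℂ) a / a) * (Suzb / Suz) := by
  have ha : a ≠ 0 := by
    rintro rfl; exact hv (by simp [hva])
  have hu1 : fu.symm 1 = u := by rw [← hfu, LinearEquiv.symm_apply_apply]
  have hv1 : fv.symm 1 = v := by rw [← hfv, LinearEquiv.symm_apply_apply]
  have huI : fu.symm Complex.I = Complex.I • u := by
    rw [← hu1, ← map_smul, smul_eq_mul, mul_one]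
  have hvI : fv.symm Complex.I = Complex.I • v := by
    rw [← hv1, ← map_smul, smul_eq_mul, mul_one]
  set A := fw (T u) with hA
  set B := fw (T (Complex.I • u)) with hB
  have hc : ∀ c : ℂ, fw (T (c • u)) = (c.re : ℂ) * A + (c.im : ℂ) * B := by
    intro c
    have key : ∀ (r : ℝ) (x : V), ((r : ℂ)) • x = r • x := fun r x => by
      rw [← Complex.coe_algebraMap]; exact algebraMap_smul ℂ r x
    have hdec : c • u = (c.re : ℝ) • u + (c.im : ℝ) • (Complex.I • u) := by
      have hce : c = (c.re : ℂ) + (c.im : ℂ) * Complex.I := (Complex.re_add_im c).symm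
      conv_lhs => rw [hce]
      rw [add_smul, mul_smul, key, key]
    rw [hdec, map_add, map_smul, map_smul, map_add,
      LinearMap.map_smul_of_tower, LinearMap.map_smul_of_tower]
    simp [Complex.real_smul]
    rfl
  have hvz : Svz = a * Suz := by
    rw [hSvz, hSuz, hv1, hvI, hva, smul_smul, hc, hc, hu1, huI, ← hA, ← hB, dil_key_z]
  have hvzb : Svzb = (starRingEnd ℂ) a * Suzb := by
    rw [hSvzb, hSuzb, hv1, hvI, hva, smul_smul, hc, hc, hu1, huI, ← hA, ← hB, dil_key_zb]
  refine ⟨by rw [hvz]; exact mul_ne_zero ha hSuz0, ?_⟩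
  rw [hvz, hvzb, mul_div_mul_comm]
end

section
/- Let V and W be complex vector spaces of complex dimension 1, T : V → W a bijective real-linear map, w ∈ W nonzero, and x, y ∈ V nonzero. For a nonzero vector v ∈ V write S_v = f_w ∘ T ∘ f_v⁻¹ : ℂ → ℂ and π_T(v) = μ_{S_v} when (S_v)_z ≠ 0. Then for all nonzero u, v ∈ V with (S_u)_z ≠ 0, one has (S_v)_z ≠ 0 and π_T(v)·conj(f_v(x))·(f_v(y))⁻¹ = π_T(u)·conj(f_u(x))·(f_u(y))⁻¹. (This scalar invariance expresses that the tensor π_T(v)·(v• ⊗ v) ∈ conj(V)* ⊗ V, where v• is the basis of conj(V)* dual to v defined by v•(x) = conj(f_v(x)), does not depend on the choice of the nonzero vector v ∈ V.) -/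
/-- For a bijective real-linear map `T : V → W` between 1-dimensional complex vector
spaces, the scalar `π_T(v)·conj(f_v(x))·(f_v(y))⁻¹` does not depend on the choice of
the nonzero vector `v ∈ V`: the tensor `π_T(v)·(v• ⊗ v) ∈ conj(V)* ⊗ V` is
well-defined. -/
theorem dilatation_tensor_well_defined
    {V W : Type*} [AddCommGroup V] [Module ℝ V] [Module ℂ V] [IsScalarTower ℝ ℂ V]
    [AddCommGroup W] [Module ℝ W] [Module ℂ W] [IsScalarTower ℝ ℂ W]
    (hdV : Module.finrank ℂ V = 1) (hdW : Module.finrank ℂ W = 1)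
    (T : V →ₗ[ℝ] W) (hT : Function.Bijective T)
    (u v : V) (hu : u ≠ 0) (hv : v ≠ 0)
    (x y : V) (hx : x ≠ 0) (hy : y ≠ 0)
    (w : W) (hw : w ≠ 0)
    (fu fv : V ≃ₗ[ℂ] ℂ) (hfu : fu u = 1) (hfv : fv v = 1)
    (fw : W →ₗ[ℂ] ℂ) (hfw : fw w = 1)
    (Suz Suzb Svz Svzb : ℂ)
    (hSuz : Suz = (fw (T (fu.symm 1)) - Complex.I * fw (T (fu.symm Complex.I))) / 2)
    (hSuzb : Suzb = (fw (T (fu.symm 1)) + Complex.I * fw (T (fu.symm Complex.I))) / 2)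
    (hSvz : Svz = (fw (T (fv.symm 1)) - Complex.I * fw (T (fv.symm Complex.I))) / 2)
    (hSvzb : Svzb = (fw (T (fv.symm 1)) + Complex.I * fw (T (fv.symm Complex.I))) / 2)
    (hSuz0 : Suz ≠ 0) :
    Svz ≠ 0 ∧
    (Svzb / Svz) * (starRingEnd ℂ) (fv x) * (fv y)⁻¹
      = (Suzb / Suz) * (starRingEnd ℂ) (fu x) * (fu y)⁻¹ := by
  set c : ℂ := fv u with hcdef
  have hc : c ≠ 0 := fun h => hu (fv.map_eq_zero_iff.mp h)
  -- fv z = fu z * c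
  have h1 : ∀ z : V, fv z = fu z * c := by
    intro z
    have hz : z = fu z • u := by
      apply fu.injective
      simp [hfu, smul_eq_mul]
    conv_lhs => rw [hz]
    rw [map_smul, smul_eq_mul, ← hcdef]
  have hu1 : fu.symm 1 = u := by rw [← hfu]; exact fu.symm_apply_apply u
  have huI : fu.symm Complex.I = Complex.I • u := by
    apply fu.injective; simp [hfu, smul_eq_mul]
  have hv1 : fv.symm 1 = c⁻¹ • u := by
    apply fv.injective; simp [smul_eq_mul, ← hcdef, inv_mul_cancel₀ hc]
  have hvI : fv.symm Complex.I = (c⁻¹ * Complex.I) • u := by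
    apply fv.injective
    simp [smul_eq_mul, ← hcdef]
    field_simp
  set A : ℂ := fw (T u) with hA
  set B : ℂ := fw (T (Complex.I • u)) with hB
  have key : ∀ z : ℂ, fw (T (z • u)) = (z.re : ℂ) * A + (z.im : ℂ) * B := by
    intro z
    have hzu : z • u = (z.re : ℝ) • u + (z.im : ℝ) • (Complex.I • u) := by
      have : z • u = ((z.re : ℂ) + (z.im : ℂ) * Complex.I) • u := by
        rw [Complex.re_add_im]
      have hcast : ∀ (r : ℝ) (m : V), (r : ℂ) • m = r • m := fun r m => by
        rw [← Complex.coe_algebraMap, algebraMap_smul]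
      rw [this, add_smul, mul_smul, hcast, hcast]
    rw [hzu, map_add, map_smul, map_smul, map_add,
      LinearMap.map_smul_of_tower, LinearMap.map_smul_of_tower,
      Complex.real_smul, Complex.real_smul]
  have hci : c⁻¹ = ((c⁻¹).re : ℂ) + ((c⁻¹).im : ℂ) * Complex.I := (Complex.re_add_im _).symm
  set a : ℝ := (c⁻¹).re
  set b : ℝ := (c⁻¹).im
  have hconj : (starRingEnd ℂ) c⁻¹ = (a : ℂ) - (b : ℂ) * Complex.I := by
    rw [hci]
    simp [map_add, map_mul, Complex.conj_I, Complex.conj_ofReal]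
    ring
  have e1 : fw (T (fv.symm 1)) = (a : ℂ) * A + (b : ℂ) * B := by
    rw [hv1, key]
  have e2 : fw (T (fv.symm Complex.I)) = (-b : ℂ) * A + (a : ℂ) * B := by
    rw [hvI, key, Complex.mul_I_re, Complex.mul_I_im]
    push_cast; ring
  have hSv : Svz = c⁻¹ * Suz := by
    rw [hSvz, hSuz, e1, e2, hu1, huI, ← hA, ← hB, hci]
    push_cast
    linear_combination ((b : ℂ) * B / 2) * Complex.I_sq
  have hSvb : Svzb = (starRingEnd ℂ) c⁻¹ * Suzb := by
    rw [hSvzb, hSuzb, e1, e2, hu1, huI, ← hA, ← hB, hconj]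
    push_cast
    linear_combination ((b : ℂ) * B / 2) * Complex.I_sq
  have hSvz0 : Svz ≠ 0 := by
    rw [hSv]; exact mul_ne_zero (inv_ne_zero hc) hSuz0
  refine ⟨hSvz0, ?_⟩
  have hcc : (starRingEnd ℂ) c ≠ 0 := by
    simpa using hc
  have hfy : fu y ≠ 0 := fun h => hy (fu.map_eq_zero_iff.mp h)
  rw [hSv, hSvb, h1 x, h1 y, map_mul, map_inv₀]
  field_simp
end
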